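/- The characteristic polynomial of the 6×6 real matrix J(X₀), where X₀ = (0,0,0,0,0,0), factors as the product (λ² + (δ₁+c)λ + (cδ₁ − α₁p₁)) · (λ² + (δ₂+c)λ + (cδ₂ − α₂q₂)) · (λ² + (δ₃+c)λ + (cδ₃ − α₃r₃)); consequently the six eigenvalues of J(X₀) are the real numbers (−δ₁−c ± √(4α₁p₁+(δ₁−c)²))/2, (−δ₂−c ± √(4α₂q₂+(δ₂−c)²))/2, and (−δ₃−c ± √(4α₃r₃+(δ₃−c)²))/2. -/

import Mathlib

open Polynomial Matrix

/-- Jacobian matrix of the HBV three-strain vector field at `x = (y₁,y₂,y₃,v₁,v₂,v₃)`. -/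
noncomputable def Jhbv (α₁ α₂ α₃ δ₁ δ₂ δ₃ c p₁ p₂ q₂ q₃ r₃ : ℝ) (x : Fin 6 → ℝ) :
    Matrix (Fin 6) (Fin 6) ℝ :=
  !![-(α₁ * x 3 + δ₁), -(α₁ * x 3), -(α₁ * x 3), α₁ * (1 - x 0 - x 1 - x 2), 0, 0;
     -(α₂ * x 4), -(α₂ * x 4 + δ₂), -(α₂ * x 4), 0, α₂ * (1 - x 0 - x 1 - x 2), 0;
     -(α₃ * x 5), -(α₃ * x 5), -(α₃ * x 5 + δ₃), 0, 0, α₃ * (1 - x 0 - x 1 - x 2);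
     p₁, 0, 0, -c, 0, 0;
     p₂, q₂, 0, 0, -c, 0;
     0, q₃, r₃, 0, 0, -c]

lemma quad_factor (s t u w : ℝ) (h1 : u + w = -s) (h2 : u * w = t) :
    (X ^ 2 + C s * X + C t : ℝ[X]) = (X - C u) * (X - C w) := by
  have hs : s = -(u + w) := by linarith
  subst hs; subst h2
  simp only [map_neg, map_add, C_mul]
  ring

lemma quad_roots (s t u w : ℝ) (h1 : u + w = -s) (h2 : u * w = t) :
    (X ^ 2 + C s * X + C t : ℝ[X]).roots = {u, w} := by
  rw [quad_factor s t u w h1 h2,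
      Polynomial.roots_mul (mul_ne_zero (X_sub_C_ne_zero u) (X_sub_C_ne_zero w)),
      roots_X_sub_C, roots_X_sub_C]
  rfl

lemma quad_sum (d c a p : ℝ) :
    (-d - c + Real.sqrt (4 * a * p + (d - c) ^ 2)) / 2 +
      (-d - c - Real.sqrt (4 * a * p + (d - c) ^ 2)) / 2 = -(d + c) := by ring

lemma quad_prod (d c a p : ℝ) (hd : 0 ≤ 4 * a * p + (d - c) ^ 2) :
    (-d - c + Real.sqrt (4 * a * p + (d - c) ^ 2)) / 2 *
      ((-d - c - Real.sqrt (4 * a * p + (d - c) ^ 2)) / 2) = c * d - a * p := by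
  have h := Real.sq_sqrt hd
  nlinarith [h]

set_option maxHeartbeats 2000000 in
set_option maxRecDepth 10000 in
/-- the characteristic polynomial of J(X₀) factors as the product of three
quadratics, and consequently the six eigenvalues of J(X₀) are the six listed real numbers. -/
theorem stmt_1 (α₁ α₂ α₃ δ₁ δ₂ δ₃ c p₁ p₂ q₂ q₃ r₃ : ℝ)
    (hα₁ : 0 < α₁) (hα₂ : 0 < α₂) (hα₃ : 0 < α₃)
    (hδ₁ : 0 < δ₁) (hδ₂ : 0 < δ₂) (hδ₃ : 0 < δ₃) (hc : 0 < c)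
    (hp₁ : 0 < p₁) (hp₂ : 0 < p₂) (hq₂ : 0 < q₂) (hq₃ : 0 < q₃) (hr₃ : 0 < r₃) :
    (Jhbv α₁ α₂ α₃ δ₁ δ₂ δ₃ c p₁ p₂ q₂ q₃ r₃ ![0, 0, 0, 0, 0, 0]).charpoly =
        (X ^ 2 + C (δ₁ + c) * X + C (c * δ₁ - α₁ * p₁)) *
          (X ^ 2 + C (δ₂ + c) * X + C (c * δ₂ - α₂ * q₂)) *
          (X ^ 2 + C (δ₃ + c) * X + C (c * δ₃ - α₃ * r₃)) ∧
      (Jhbv α₁ α₂ α₃ δ₁ δ₂ δ₃ c p₁ p₂ q₂ q₃ r₃ ![0, 0, 0, 0, 0, 0]).charpoly.roots =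
        {(-δ₁ - c + Real.sqrt (4 * α₁ * p₁ + (δ₁ - c) ^ 2)) / 2,
         (-δ₁ - c - Real.sqrt (4 * α₁ * p₁ + (δ₁ - c) ^ 2)) / 2,
         (-δ₂ - c + Real.sqrt (4 * α₂ * q₂ + (δ₂ - c) ^ 2)) / 2,
         (-δ₂ - c - Real.sqrt (4 * α₂ * q₂ + (δ₂ - c) ^ 2)) / 2,
         (-δ₃ - c + Real.sqrt (4 * α₃ * r₃ + (δ₃ - c) ^ 2)) / 2,
         (-δ₃ - c - Real.sqrt (4 * α₃ * r₃ + (δ₃ - c) ^ 2)) / 2} := by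
  have h1 : (0:ℝ) ≤ 4 * α₁ * p₁ + (δ₁ - c) ^ 2 := by positivity
  have h2 : (0:ℝ) ≤ 4 * α₂ * q₂ + (δ₂ - c) ^ 2 := by positivity
  have h3 : (0:ℝ) ≤ 4 * α₃ * r₃ + (δ₃ - c) ^ 2 := by positivity
  have hcp : (Jhbv α₁ α₂ α₃ δ₁ δ₂ δ₃ c p₁ p₂ q₂ q₃ r₃ ![0, 0, 0, 0, 0, 0]).charpoly =
      (X ^ 2 + C (δ₁ + c) * X + C (c * δ₁ - α₁ * p₁)) *
        (X ^ 2 + C (δ₂ + c) * X + C (c * δ₂ - α₂ * q₂)) *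
        (X ^ 2 + C (δ₃ + c) * X + C (c * δ₃ - α₃ * r₃)) := by
    rw [Matrix.charpoly]
    simp only [Matrix.det_succ_row_zero, Fin.sum_univ_succ, Fin.sum_univ_zero]
    simp [Fin.succAbove, Fin.lt_def, Fin.ext_iff, Matrix.submatrix_apply,
      charmatrix_apply, Jhbv, Matrix.diagonal_apply]
    ring
  refine ⟨hcp, ?_⟩
  rw [hcp]
  have ne1 : (X ^ 2 + C (δ₁ + c) * X + C (c * δ₁ - α₁ * p₁) : ℝ[X]) ≠ 0 := by
    rw [quad_factor _ _ _ _ (quad_sum δ₁ c α₁ p₁) (quad_prod δ₁ c α₁ p₁ h1)]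
    exact mul_ne_zero (X_sub_C_ne_zero _) (X_sub_C_ne_zero _)
  have ne2 : (X ^ 2 + C (δ₂ + c) * X + C (c * δ₂ - α₂ * q₂) : ℝ[X]) ≠ 0 := by
    rw [quad_factor _ _ _ _ (quad_sum δ₂ c α₂ q₂) (quad_prod δ₂ c α₂ q₂ h2)]
    exact mul_ne_zero (X_sub_C_ne_zero _) (X_sub_C_ne_zero _)
  have ne3 : (X ^ 2 + C (δ₃ + c) * X + C (c * δ₃ - α₃ * r₃) : ℝ[X]) ≠ 0 := by
    rw [quad_factor _ _ _ _ (quad_sum δ₃ c α₃ r₃) (quad_prod δ₃ c α₃ r₃ h3)]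
    exact mul_ne_zero (X_sub_C_ne_zero _) (X_sub_C_ne_zero _)
  rw [Polynomial.roots_mul (mul_ne_zero (mul_ne_zero ne1 ne2) ne3),
      Polynomial.roots_mul (mul_ne_zero ne1 ne2),
      quad_roots _ _ _ _ (quad_sum δ₁ c α₁ p₁) (quad_prod δ₁ c α₁ p₁ h1),
      quad_roots _ _ _ _ (quad_sum δ₂ c α₂ q₂) (quad_prod δ₂ c α₂ q₂ h2),
      quad_roots _ _ _ _ (quad_sum δ₃ c α₃ r₃) (quad_prod δ₃ c α₃ r₃ h3)]
  rfl
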